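/- Let (Aᵢ), (Bᵢ), (Cᵢ), (Dᵢ) be inverse sequences indexed by the natural numbers, where each Aᵢ is a group (with homomorphisms as bonding maps) and Bᵢ, Cᵢ, Dᵢ are pointed sets, together with level maps Bᵢ → Cᵢ → Dᵢ of pointed sets commuting with the bonding maps and actions of Aᵢ on Bᵢ compatible with the bonding maps (the bonding map applied to a·b equals the image of a acting on the image of b). Assume that for each i: (exactness at Bᵢ) the nonempty point-inverses of Bᵢ → Cᵢ are precisely the orbits of the Aᵢ-action, and (exactness at Cᵢ) the preimage of the basepoint under Cᵢ → Dᵢ equals the image of Bᵢ → Cᵢ. If (Aᵢ) and (Cᵢ) satisfy the Mittag-Leffler condition and (Dᵢ) satisfies the dual Mittag-Leffler condition, then (Bᵢ) satisfies the Mittag-Leffler condition. -/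
import Mathlib


/-- An inverse sequence of groups `⋯ → A₂ → A₁ → A₀`, presented by its compatible
composite bonding homomorphisms. -/
structure GroupInvSeq (A : ℕ → Type) [∀ i, Group (A i)] : Type where
  bond : ∀ ⦃i j : ℕ⦄, i ≤ j → (A j →* A i)
  bond_refl : ∀ i, bond (le_refl i) = MonoidHom.id (A i)
  bond_comp : ∀ ⦃i j k : ℕ⦄ (hij : i ≤ j) (hjk : j ≤ k),
    (bond hij).comp (bond hjk) = bond (hij.trans hjk)

/-- The Mittag-Leffler condition for an inverse sequence of groups. -/
def GroupInvSeq.MittagLeffler {A : ℕ → Type} [∀ i, Group (A i)]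
    (S : GroupInvSeq A) : Prop :=
  ∀ i, ∃ j, ∃ hij : i < j, ∀ k, ∀ hjk : j < k,
    Set.range (S.bond (hij.le.trans hjk.le)) = Set.range (S.bond hij.le)

/-- An inverse sequence of pointed sets `⋯ → X₂ → X₁ → X₀`, presented by its
compatible composite basepoint-preserving bonding maps. -/
structure PointedInvSeq (X : ℕ → Type) (pt : ∀ i, X i) : Type where
  bond : ∀ ⦃i j : ℕ⦄, i ≤ j → X j → X i
  bond_refl : ∀ i (x : X i), bond (le_refl i) x = x
  bond_comp : ∀ ⦃i j k : ℕ⦄ (hij : i ≤ j) (hjk : j ≤ k) (x : X k),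
    bond (hij.trans hjk) x = bond hij (bond hjk x)
  bond_pt : ∀ ⦃i j : ℕ⦄ (h : i ≤ j), bond h (pt j) = pt i

/-- The Mittag-Leffler condition for an inverse sequence of pointed sets. -/
def PointedInvSeq.MittagLeffler {X : ℕ → Type} {pt : ∀ i, X i}
    (S : PointedInvSeq X pt) : Prop :=
  ∀ i, ∃ j, ∃ hij : i < j, ∀ k, ∀ hjk : j < k,
    Set.range (S.bond (hij.le.trans hjk.le)) = Set.range (S.bond hij.le)

/-- The dual Mittag-Leffler condition for an inverse sequence of pointed sets:
there is `k` such that for every `j > k` there is `i > j` for which the kernel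
(preimage of the basepoint) of `X i → X k` equals the kernel of `X i → X j`. -/
def PointedInvSeq.DualMittagLeffler {X : ℕ → Type} {pt : ∀ i, X i}
    (S : PointedInvSeq X pt) : Prop :=
  ∃ k, ∀ j, ∀ hkj : k < j, ∃ i, ∃ hji : j < i,
    {x : X i | S.bond (hkj.le.trans hji.le) x = pt k} =
      {x : X i | S.bond hji.le x = pt j}

/-- Dydak's lemma: given an exact sequence `Aᵢ → Bᵢ → Cᵢ → Dᵢ` of inverse sequences,
where the `Aᵢ` are groups acting on the pointed sets `Bᵢ` compatibly with the bonding
maps, exactness meaning that the nonempty point-inverses of `Bᵢ → Cᵢ` are precisely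
the orbits of the `Aᵢ`-action and that the kernel of `Cᵢ → Dᵢ` is the image of
`Bᵢ → Cᵢ`: if `(Aᵢ)` and `(Cᵢ)` are Mittag-Leffler and `(Dᵢ)` is dual Mittag-Leffler,
then `(Bᵢ)` is Mittag-Leffler. -/
theorem mittagLeffler_of_exact_sequence
    {A B C D : ℕ → Type} [∀ i, Group (A i)]
    {ptB : ∀ i, B i} {ptC : ∀ i, C i} {ptD : ∀ i, D i}
    (SA : GroupInvSeq A) (SB : PointedInvSeq B ptB)
    (SC : PointedInvSeq C ptC) (SD : PointedInvSeq D ptD)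
    (act : ∀ i, A i → B i → B i)
    (act_one : ∀ i (b : B i), act i 1 b = b)
    (act_mul : ∀ i (a a' : A i) (b : B i), act i (a * a') b = act i a (act i a' b))
    (act_bond : ∀ ⦃i j : ℕ⦄ (h : i ≤ j) (a : A j) (b : B j),
      SB.bond h (act j a b) = act i (SA.bond h a) (SB.bond h b))
    (u : ∀ i, B i → C i) (v : ∀ i, C i → D i)
    (u_pt : ∀ i, u i (ptB i) = ptC i) (v_pt : ∀ i, v i (ptC i) = ptD i)
    (u_bond : ∀ ⦃i j : ℕ⦄ (h : i ≤ j) (b : B j), u i (SB.bond h b) = SC.bond h (u j b))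
    (v_bond : ∀ ⦃i j : ℕ⦄ (h : i ≤ j) (c : C j), v i (SC.bond h c) = SD.bond h (v j c))
    (exactB : ∀ i (b b' : B i), u i b = u i b' ↔ ∃ a : A i, act i a b = b')
    (exactC : ∀ i (c : C i), v i c = ptD i ↔ ∃ b : B i, u i b = c)
    (hA : SA.MittagLeffler) (hC : SC.MittagLeffler) (hD : SD.DualMittagLeffler) :
    SB.MittagLeffler := by

  classical
  obtain ⟨k₀, hk₀⟩ := hD
  -- Main claim, for levels strictly above the dual-Mittag-Leffler index k₀.
  have key : ∀ i, k₀ < i → ∃ j, ∃ hij : i < j, ∀ k, ∀ hjk : j < k,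
      Set.range (SB.bond (hij.le.trans hjk.le)) = Set.range (SB.bond hij.le) := by
    intro i hk₀i
    obtain ⟨n₁, hn₁, hA1⟩ := hA i
    obtain ⟨n₂, hn₂, hC2⟩ := hC n₁
    refine ⟨n₂, hn₁.trans hn₂, fun k hk => ?_⟩
    apply Set.Subset.antisymm
    · rintro _ ⟨b, rfl⟩
      exact ⟨SB.bond hk.le b,
        (SB.bond_comp (hn₁.le.trans hn₂.le) hk.le b).symm⟩
    · rintro _ ⟨b, rfl⟩
      -- auxiliary level m > k from the dual Mittag-Leffler property of D
      obtain ⟨m, hkm, hker⟩ := hk₀ k (hk₀i.trans (hn₁.trans (hn₂.trans hk)))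
      have hn₁m : n₁ ≤ m := hn₂.le.trans (hk.le.trans hkm.le)
      have hn₁k : n₁ ≤ k := hn₂.le.trans hk.le
      -- lift u(image of b at level n₁) to C at level m, using C Mittag-Leffler
      have hmemC : u n₁ (SB.bond hn₂.le b) ∈
          Set.range (SC.bond (hn₂.le.trans ((hk.trans hkm).le))) := by
        rw [hC2 m (hk.trans hkm)]
        exact ⟨u n₂ b, (u_bond hn₂.le b).symm⟩
      obtain ⟨c_m, hc⟩ := hmemC
      have hc' : SC.bond hn₁m c_m = u n₁ (SB.bond hn₂.le b) := hc
      -- v of c_m dies at level n₁, hence at level k₀, hence at level k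
      have hd1 : v n₁ (SC.bond hn₁m c_m) = ptD n₁ := by
        rw [hc']
        exact (exactC n₁ _).mpr ⟨SB.bond hn₂.le b, rfl⟩
      have hd2 : SD.bond ((hk₀i.le.trans hn₁.le).trans hn₁m) (v m c_m) = ptD k₀ := by
        rw [SD.bond_comp (hk₀i.le.trans hn₁.le) hn₁m, ← v_bond hn₁m, hd1, SD.bond_pt]
      have hmemD : v m c_m ∈
          {x : D m | SD.bond ((hk₀i.trans (hn₁.trans (hn₂.trans hk))).le.trans hkm.le)
            x = ptD k₀} := hd2
      rw [hker] at hmemD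
      have hd3 : v k (SC.bond hkm.le c_m) = ptD k := by
        rw [v_bond hkm.le]; exact hmemD
      -- lift to B at level k
      obtain ⟨b_k, hbk⟩ := (exactC k _).mp hd3
      -- the two lifts agree at level n₁ up to the A-action
      have hun₁ : u n₁ (SB.bond hn₁k b_k) = u n₁ (SB.bond hn₂.le b) := by
        rw [u_bond hn₁k, hbk, ← SC.bond_comp hn₁k hkm.le, ← hc']
      obtain ⟨a, ha⟩ := (exactB n₁ _ _).mp hun₁
      -- push the correcting element a up to level k, using A Mittag-Leffler
      have hmemA : SA.bond hn₁.le a ∈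
          Set.range (SA.bond (hn₁.le.trans ((hn₂.trans hk).le))) := by
        rw [hA1 k (hn₂.trans hk)]
        exact ⟨a, rfl⟩
      obtain ⟨a_k, hak⟩ := hmemA
      have hak' : SA.bond (hn₁.le.trans hn₁k) a_k = SA.bond hn₁.le a := hak
      refine ⟨act k a_k b_k, ?_⟩
      calc SB.bond (hn₁.le.trans hn₁k) (act k a_k b_k)
          = act i (SA.bond (hn₁.le.trans hn₁k) a_k)
              (SB.bond (hn₁.le.trans hn₁k) b_k) := act_bond _ a_k b_k
        _ = act i (SA.bond hn₁.le a)
              (SB.bond hn₁.le (SB.bond hn₁k b_k)) := by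
              rw [hak', SB.bond_comp hn₁.le hn₁k]
        _ = SB.bond hn₁.le (act n₁ a (SB.bond hn₁k b_k)) := (act_bond hn₁.le a _).symm
        _ = SB.bond hn₁.le (SB.bond hn₂.le b) := by rw [ha]
        _ = SB.bond (hn₁.le.trans hn₂.le) b := (SB.bond_comp hn₁.le hn₂.le b).symm
  -- Reduce the general case to levels above k₀.
  intro i
  set i' := max i k₀ + 1 with hi'
  have hii' : i < i' := Nat.lt_succ_of_le (le_max_left _ _)
  have hk₀i' : k₀ < i' := Nat.lt_succ_of_le (le_max_right _ _)
  obtain ⟨j, hij', hstab⟩ := key i' hk₀i'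
  refine ⟨j, hii'.trans hij', fun k hjk => ?_⟩
  apply Set.Subset.antisymm
  · rintro _ ⟨b, rfl⟩
    exact ⟨SB.bond hjk.le b,
      (SB.bond_comp ((hii'.trans hij').le) hjk.le b).symm⟩
  · rintro _ ⟨b, rfl⟩
    have hmem : SB.bond hij'.le b ∈
        Set.range (SB.bond (hij'.le.trans hjk.le)) := by
      rw [hstab k hjk]; exact ⟨b, rfl⟩
    obtain ⟨b', hb'⟩ := hmem
    refine ⟨b', ?_⟩
    calc SB.bond ((hii'.le.trans hij'.le).trans hjk.le) b'
        = SB.bond hii'.le (SB.bond (hij'.le.trans hjk.le) b') :=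
          SB.bond_comp hii'.le (hij'.le.trans hjk.le) b'
      _ = SB.bond hii'.le (SB.bond hij'.le b) := by rw [hb']
      _ = SB.bond (hii'.le.trans hij'.le) b := (SB.bond_comp hii'.le hij'.le b).symm
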